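/- arXiv:2603.11466 — 2 statements merged into one kernel-verified Lean document; each statement's English description precedes it below -/
import Mathlib

section
/- Let φ : ℝ^d → ℝ^{d-1} be a map whose derivative Dφ is α-Hölder continuous with constant L (0 < α ≤ 1), and let Y ⊆ ℝ^d be a set of Hausdorff dimension at most β such that rank(Dφ(x)) ≤ k for every x ∈ Y, where 0 ≤ k ≤ d−2. Then the image φ(Y) has Hausdorff dimension at most (β + αk)/(1 + α). -/
open MeasureTheory

open MeasureTheory Metric Set Module ENNReal

lemma coord_le_norm {m : ℕ} (x : EuclideanSpace ℝ (Fin m)) (i : Fin m) : |x i| ≤ ‖x‖ := by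
  rw [EuclideanSpace.norm_eq]
  have h1 : |x i| = Real.sqrt (‖x i‖ ^ 2) := by
    rw [Real.sqrt_sq_eq_abs]; simp [Real.norm_eq_abs]
  rw [h1]
  apply Real.sqrt_le_sqrt
  exact Finset.single_le_sum (f := fun j => ‖x j‖ ^ 2) (fun j _ => by positivity)
    (Finset.mem_univ i)

lemma grid_cover (m : ℕ) (R c : ℝ) (hc : 0 < c) :
    ∃ F : Finset (EuclideanSpace ℝ (Fin m)),
      F.card ≤ (2 * ⌈R / c⌉₊ + 1) ^ m ∧
      closedBall (0 : EuclideanSpace ℝ (Fin m)) R ⊆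
        ⋃ p ∈ F, closedBall p (c * Real.sqrt m) := by
  classical
  set N : ℕ := ⌈R / c⌉₊ with hN
  set Z : Finset (Fin m → ℤ) := Fintype.piFinset (fun _ => Finset.Icc (-(N:ℤ)) N) with hZ
  refine ⟨Z.image (fun z => (WithLp.toLp 2 (fun i => c * z i) : EuclideanSpace ℝ (Fin m))), ?_, ?_⟩
  · refine le_trans Finset.card_image_le ?_
    rw [hZ, Fintype.card_piFinset]
    apply le_of_eq
    rw [Finset.prod_const]
    congr 1
    · rw [Int.card_Icc]
      omega
    · exact Finset.card_fin m
  · intro x hx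
    have hxR : ‖x‖ ≤ R := by simpa using mem_closedBall_zero_iff.mp hx
    set z : Fin m → ℤ := fun i => ⌊x i / c⌋ with hz
    have hcoord : ∀ i, |x i| ≤ R := fun i => (coord_le_norm x i).trans hxR
    have hRN : R ≤ N * c := by
      rw [hN]
      calc R = (R / c) * c := by field_simp
      _ ≤ (⌈R / c⌉₊ : ℝ) * c := by
          apply mul_le_mul_of_nonneg_right (Nat.le_ceil _) hc.le
    have hzmem : z ∈ Z := by
      rw [hZ, Fintype.mem_piFinset]
      intro i
      rw [Finset.mem_Icc]
      constructor
      · rw [Int.le_floor]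
        push_cast
        rw [le_div_iff₀ hc]
        nlinarith [abs_le.mp (hcoord i)]
      · have h1 : x i / c ≤ (N : ℝ) := by
          rw [div_le_iff₀ hc]
          nlinarith [abs_le.mp (hcoord i)]
        calc ⌊x i / c⌋ ≤ ⌊(N : ℝ)⌋ := Int.floor_le_floor h1
        _ = N := by simp
    refine mem_iUnion₂.mpr ⟨_, Finset.mem_image_of_mem _ hzmem, ?_⟩
    rw [mem_closedBall, EuclideanSpace.dist_eq]
    have key : ∀ i : Fin m, dist (x i) ((fun j => c * (z j : ℝ)) i) ^ 2 ≤ c ^ 2 := by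
      intro i
      have h1 : dist (x i) (c * (z i : ℝ)) ≤ c := by
        rw [Real.dist_eq, abs_le]
        have hf1 := Int.floor_le (x i / c)
        have hf2 := Int.lt_floor_add_one (x i / c)
        rw [hz]
        have hl : (⌊x i / c⌋ : ℝ) * c ≤ x i := (le_div_iff₀ hc).mp hf1
        have hu : x i < ((⌊x i / c⌋ : ℝ) + 1) * c := (div_lt_iff₀ hc).mp hf2
        constructor <;> nlinarith
      have h0 : (0:ℝ) ≤ dist (x i) (c * (z i : ℝ)) := dist_nonneg
      nlinarith
    calc Real.sqrt (∑ i, dist (x i) ((fun j => c * (z j : ℝ)) i) ^ 2)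
        ≤ Real.sqrt (∑ _i : Fin m, c ^ 2) := by
          apply Real.sqrt_le_sqrt
          exact Finset.sum_le_sum (fun i _ => key i)
      _ = c * Real.sqrt m := by
          rw [Finset.sum_const, Finset.card_univ, Fintype.card_fin, nsmul_eq_mul,
            Real.sqrt_mul (by positivity), Real.sqrt_sq hc.le]
          ring

lemma subspace_cover {n : ℕ} (W : Submodule ℝ (EuclideanSpace ℝ (Fin n))) (R c : ℝ) (hc : 0 < c) :
    ∃ F : Finset (EuclideanSpace ℝ (Fin n)),
      F.card ≤ (2 * ⌈R / c⌉₊ + 1) ^ (finrank ℝ W) ∧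
      ∀ y ∈ W, ‖y‖ ≤ R → ∃ p ∈ F, dist y p ≤ c * Real.sqrt (finrank ℝ W) := by
  classical
  set m := finrank ℝ W with hm
  obtain ⟨F₀, hcard, hcov⟩ := grid_cover m R c hc
  let b := stdOrthonormalBasis ℝ W
  let e : W ≃ₗᵢ[ℝ] EuclideanSpace ℝ (Fin m) := b.repr
  refine ⟨F₀.image (fun q => ((e.symm q : W) : EuclideanSpace ℝ (Fin n))),
    le_trans Finset.card_image_le hcard, ?_⟩
  intro y hy hyR
  have hmem : e ⟨y, hy⟩ ∈ closedBall (0 : EuclideanSpace ℝ (Fin m)) R := by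
    rw [mem_closedBall_zero_iff, e.norm_map]
    exact hyR
  obtain ⟨p, hp, hd⟩ := mem_iUnion₂.mp (hcov hmem)
  refine ⟨((e.symm p : W) : EuclideanSpace ℝ (Fin n)), Finset.mem_image_of_mem _ hp, ?_⟩
  have h1 : dist y ((e.symm p : W) : EuclideanSpace ℝ (Fin n))
      = dist (⟨y, hy⟩ : W) (e.symm p) := rfl
  rw [h1, ← e.dist_map, e.apply_symm_apply]
  exact mem_closedBall.mp hd

lemma piece_cover {d k : ℕ} (α L : ℝ) (hα : 0 < α) (hL : 0 ≤ L)
    (φ : EuclideanSpace ℝ (Fin d) → EuclideanSpace ℝ (Fin (d - 1)))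
    (hdiff : Differentiable ℝ φ)
    (hHolder : ∀ x y, ‖fderiv ℝ φ x - fderiv ℝ φ y‖ ≤ L * ‖x - y‖ ^ α)
    (x : EuclideanSpace ℝ (Fin d))
    (hrank : finrank ℝ (LinearMap.range (fderiv ℝ φ x).toLinearMap) ≤ k)
    (t : Set (EuclideanSpace ℝ (Fin d))) (hxt : x ∈ t) (r : ℝ) (hr : 0 < r)
    (ht : t ⊆ closedBall x r)
    (M : ℝ) (hM : ‖fderiv ℝ φ x‖ ≤ M) (c : ℝ) (hc : 0 < c) :
    ∃ F : Finset (EuclideanSpace ℝ (Fin (d - 1))),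
      F.card ≤ (2 * ⌈M * r / c⌉₊ + 1) ^ k ∧
      φ '' t ⊆ ⋃ p ∈ F, closedBall p (c * Real.sqrt k + L * r ^ α * r) := by
  classical
  set W := LinearMap.range (fderiv ℝ φ x).toLinearMap with hW
  obtain ⟨F₀, hcard, hcov⟩ := subspace_cover W (M * r) c hc
  refine ⟨F₀.image (fun p => φ x + p), ?_, ?_⟩
  · refine le_trans Finset.card_image_le (le_trans hcard ?_)
    exact Nat.pow_le_pow_right (by omega) hrank
  · rintro _ ⟨y, hy, rfl⟩
    set v := fderiv ℝ φ x (y - x) with hv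
    have hvW : v ∈ W := ⟨y - x, rfl⟩
    have hyx : ‖y - x‖ ≤ r := by
      have := ht hy
      rw [mem_closedBall, dist_eq_norm] at this
      exact this
    have hvnorm : ‖v‖ ≤ M * r := by
      calc ‖v‖ ≤ ‖fderiv ℝ φ x‖ * ‖y - x‖ := (fderiv ℝ φ x).le_opNorm _
      _ ≤ M * r := by
          apply mul_le_mul hM hyx (norm_nonneg _) (le_trans (norm_nonneg _) hM)
    obtain ⟨p, hp, hdp⟩ := hcov v hvW hvnorm
    have htaylor : ‖φ y - φ x - v‖ ≤ L * r ^ α * r := by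
      have hbound : ∀ ξ ∈ closedBall x r, ‖fderiv ℝ φ ξ - fderiv ℝ φ x‖ ≤ L * r ^ α := by
        intro ξ hξ
        refine le_trans (hHolder ξ x) ?_
        apply mul_le_mul_of_nonneg_left _ hL
        apply Real.rpow_le_rpow (norm_nonneg _) _ hα.le
        rw [← dist_eq_norm]
        exact mem_closedBall.mp hξ
      have := (convex_closedBall x r).norm_image_sub_le_of_norm_fderiv_le'
        (fun ξ _ => hdiff.differentiableAt) hbound
        (mem_closedBall_self hr.le) (ht hy)
      refine le_trans this ?_
      apply mul_le_mul_of_nonneg_left hyx (by positivity)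
    refine mem_iUnion₂.mpr ⟨φ x + p, Finset.mem_image_of_mem _ hp, ?_⟩
    rw [mem_closedBall, dist_eq_norm]
    have heq : φ y - (φ x + p) = (φ y - φ x - v) + (v - p) := by abel
    rw [heq]
    refine le_trans (norm_add_le _ _) ?_
    have h2 : ‖v - p‖ ≤ c * Real.sqrt k := by
      rw [← dist_eq_norm]
      refine le_trans hdp ?_
      apply mul_le_mul_of_nonneg_left _ hc.le
      exact Real.sqrt_le_sqrt (by exact_mod_cast hrank)
    linarith

lemma emetric_diam_closedBall {X : Type*} [PseudoMetricSpace X] (p : X) (rad : ℝ) :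
    EMetric.diam (closedBall p rad) ≤ ENNReal.ofReal (2 * rad) := by
  apply EMetric.diam_le
  intro y hy z hz
  rw [edist_dist]
  apply ENNReal.ofReal_le_ofReal
  calc dist y z ≤ dist y p + dist p z := dist_triangle _ _ _
  _ ≤ rad + rad := add_le_add (mem_closedBall.mp hy)
      (by rw [dist_comm]; exact mem_closedBall.mp hz)
  _ = 2 * rad := by ring

lemma piece_cover2 {d k : ℕ} (α L M s : ℝ) (hα : 0 < α) (hL : 0 ≤ L) (hM : 0 ≤ M)
    (hs : 0 < s)
    (φ : EuclideanSpace ℝ (Fin d) → EuclideanSpace ℝ (Fin (d - 1)))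
    (hdiff : Differentiable ℝ φ)
    (hHolder : ∀ x y, ‖fderiv ℝ φ x - fderiv ℝ φ y‖ ≤ L * ‖x - y‖ ^ α)
    (Y : Set (EuclideanSpace ℝ (Fin d)))
    (hrank : ∀ x ∈ Y, finrank ℝ (LinearMap.range (fderiv ℝ φ x).toLinearMap) ≤ k)
    (hMb : ∀ x ∈ Y, ‖fderiv ℝ φ x‖ ≤ M)
    (u : Set (EuclideanSpace ℝ (Fin d))) (hu : u ⊆ Y)
    (hu1 : EMetric.diam u ≤ ENNReal.ofReal 1) :
    ∃ g : ℕ → Set (EuclideanSpace ℝ (Fin (d - 1))),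
      (φ '' u ⊆ ⋃ j, g j) ∧
      (∀ j, EMetric.diam (g j) ≤
        ENNReal.ofReal ((2 * (Real.sqrt k + L)) * (EMetric.diam u).toReal ^ (1 + α))) ∧
      ∑' j, EMetric.diam (g j) ^ s ≤
        ENNReal.ofReal ((2 * M + 3) ^ k * (2 * (Real.sqrt k + L)) ^ s) *
          EMetric.diam u ^ ((1 + α) * s - α * k) := by
  classical
  set C₂ : ℝ := 2 * (Real.sqrt k + L) with hC₂
  have hC₂0 : 0 ≤ C₂ := by positivity
  have hdne : EMetric.diam u ≠ ⊤ := by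
    intro h; rw [h] at hu1; exact (ENNReal.ofReal_lt_top.trans_le hu1).ne rfl
  set ρ : ℝ := (EMetric.diam u).toReal with hρ
  have hρ0 : 0 ≤ ρ := ENNReal.toReal_nonneg
  have hρ1 : ρ ≤ 1 := by
    rw [hρ]
    calc (EMetric.diam u).toReal ≤ (ENNReal.ofReal 1).toReal :=
      ENNReal.toReal_mono ENNReal.ofReal_ne_top hu1
    _ = 1 := by simp
  rcases Set.eq_empty_or_nonempty u with hue | ⟨x, hx⟩
  · exact ⟨fun _ => ∅, by simp [hue], by simp [EMetric.diam], by
      simp [ENNReal.zero_rpow_of_pos hs, EMetric.diam]⟩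
  rcases eq_or_lt_of_le hρ0 with hρz | hρpos
  · -- diameter zero : u ⊆ {x}
    have husub : u ⊆ {x} := by
      intro y hy
      have h1 : edist y x ≤ EMetric.diam u := EMetric.edist_le_diam_of_mem hy hx
      have h2 : EMetric.diam u = 0 := by
        rw [← ENNReal.ofReal_toReal hdne, ← hρ, ← hρz]; simp
      rw [h2, nonpos_iff_eq_zero, edist_eq_zero] at h1
      exact h1
    refine ⟨fun j => if j = 0 then {φ x} else ∅, ?_, ?_, ?_⟩
    · intro z hz
      obtain ⟨y, hy, rfl⟩ := hz
      have : y = x := husub hy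
      subst this
      refine mem_iUnion.mpr ⟨0, ?_⟩
      simp
    · intro j
      by_cases hj : j = 0
      · subst hj
        simp [EMetric.diam]
      · simp [hj, EMetric.diam]
    · have hz : ∀ j : ℕ, EMetric.diam (if j = 0 then ({φ x} : Set _) else ∅) ^ s = 0 := by
        intro j
        by_cases hj : j = 0
        · subst hj
          simp [ENNReal.zero_rpow_of_pos hs, EMetric.diam]
        · simp [hj, ENNReal.zero_rpow_of_pos hs, EMetric.diam]
      simp only [hz, tsum_zero]
      exact zero_le
  · -- main case
    have hρpos' : 0 < ρ := hρpos
    have hudiam : EMetric.diam u = ENNReal.ofReal ρ := by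
      rw [hρ, ENNReal.ofReal_toReal hdne]
    have hball : u ⊆ closedBall x ρ := by
      intro y hy
      rw [mem_closedBall, dist_edist]
      calc (edist y x).toReal ≤ (EMetric.diam u).toReal :=
        ENNReal.toReal_mono hdne (EMetric.edist_le_diam_of_mem hy hx)
      _ = ρ := rfl
    have hcpos : (0:ℝ) < ρ ^ (1 + α) := Real.rpow_pos_of_pos hρpos' _
    obtain ⟨F, hFcard, hFcov⟩ := piece_cover α L hα hL φ hdiff hHolder x
      (hrank x (hu hx)) u hx ρ hρpos' hball M (hMb x (hu hx)) (ρ ^ (1 + α)) hcpos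
    set rad : ℝ := ρ ^ (1 + α) * Real.sqrt k + L * ρ ^ α * ρ with hrad
    have h5 : ρ ^ (1 + α) = ρ ^ α * ρ := by
      rw [add_comm 1 α, Real.rpow_add hρpos', Real.rpow_one]
    have hradeq : rad = (Real.sqrt k + L) * ρ ^ (1 + α) := by
      rw [hrad, h5]; ring
    refine ⟨fun j => if h : j < F.toList.length then closedBall (F.toList.get ⟨j, h⟩) rad
      else ∅, ?_, ?_, ?_⟩
    · intro z hz
      obtain ⟨p, hp, hzp⟩ := mem_iUnion₂.mp (hFcov hz)
      obtain ⟨j, hj⟩ := List.mem_iff_get.mp (Finset.mem_toList.mpr hp)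
      refine mem_iUnion.mpr ⟨j, ?_⟩
      simp only [j.isLt, dif_pos]
      rw [hj]
      exact hzp
    · intro j
      by_cases h : j < F.toList.length
      · simp only [h, dif_pos]
        refine le_trans (emetric_diam_closedBall _ _) ?_
        apply ENNReal.ofReal_le_ofReal
        exact le_of_eq (by rw [hradeq, hC₂]; ring)
      · simp only [h, dif_neg, not_false_iff, EMetric.diam, EMetric.diam_empty]
        exact zero_le
    · -- the tsum bound
      have hzero : ∀ j ∉ Finset.range F.toList.length,
          EMetric.diam ((fun j => if h : j < F.toList.length then
            closedBall (F.toList.get ⟨j, h⟩) rad else ∅) j) ^ s = 0 := by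
        intro j hj
        rw [Finset.mem_range, not_lt] at hj
        simp only [dif_neg (not_lt.mpr hj), EMetric.diam, EMetric.diam_empty]
        exact ENNReal.zero_rpow_of_pos hs
      rw [tsum_eq_sum hzero]
      have hterm : ∀ j ∈ Finset.range F.toList.length,
          EMetric.diam ((fun j => if h : j < F.toList.length then
            closedBall (F.toList.get ⟨j, h⟩) rad else ∅) j) ^ s ≤
            ENNReal.ofReal (C₂ * ρ ^ (1 + α)) ^ s := by
        intro j hj
        rw [Finset.mem_range] at hj
        simp only [dif_pos hj]
        refine ENNReal.rpow_le_rpow ?_ hs.le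
        refine le_trans (emetric_diam_closedBall _ _) ?_
        apply ENNReal.ofReal_le_ofReal
        exact le_of_eq (by rw [hradeq, hC₂]; ring)
      refine le_trans (Finset.sum_le_sum hterm) ?_
      rw [Finset.sum_const, Finset.card_range, nsmul_eq_mul, Finset.length_toList]
      -- real-number card bound
      have hρnegα : (1:ℝ) ≤ ρ ^ (-α) := by
        have := Real.rpow_le_rpow_of_exponent_ge hρpos' hρ1 (neg_nonpos.mpr hα.le)
        simpa using this
      have h1 : M * ρ / ρ ^ (1 + α) = M * ρ ^ (-α) := by
        rw [mul_div_assoc]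
        congr 1
        rw [show -α = 1 - (1 + α) by ring, Real.rpow_sub hρpos', Real.rpow_one]
      have hceil : (⌈M * ρ / ρ ^ (1 + α)⌉₊ : ℝ) ≤ M * ρ ^ (-α) + 1 := by
        rw [h1]
        exact le_of_lt (Nat.ceil_lt_add_one (by positivity))
      have hNle : ((2 * ⌈M * ρ / ρ ^ (1 + α)⌉₊ + 1 : ℕ) : ℝ) ≤ (2 * M + 3) * ρ ^ (-α) := by
        push_cast
        nlinarith
      have hcard : (F.card : ℝ) ≤ (2 * M + 3) ^ k * ρ ^ (-(α * k)) := by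
        calc (F.card : ℝ) ≤ (((2 * ⌈M * ρ / ρ ^ (1 + α)⌉₊ + 1) ^ k : ℕ) : ℝ) := by
              exact_mod_cast hFcard
        _ = (((2 * ⌈M * ρ / ρ ^ (1 + α)⌉₊ + 1 : ℕ) : ℝ)) ^ k := by push_cast; ring
        _ ≤ ((2 * M + 3) * ρ ^ (-α)) ^ k := by
              apply pow_le_pow_left₀ (by positivity) hNle
        _ = (2 * M + 3) ^ k * (ρ ^ (-α)) ^ k := by rw [mul_pow]
        _ = (2 * M + 3) ^ k * ρ ^ (-(α * k)) := by
              congr 1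
              rw [← Real.rpow_natCast (ρ ^ (-α)) k, ← Real.rpow_mul hρ0]
              ring_nf
      -- put everything into ofReal form
      have hC₂ρ : (0:ℝ) ≤ C₂ * ρ ^ (1 + α) := by positivity
      have e1 : (ENNReal.ofReal (C₂ * ρ ^ (1 + α))) ^ s
          = ENNReal.ofReal ((C₂ * ρ ^ (1 + α)) ^ s) :=
        ENNReal.ofReal_rpow_of_nonneg hC₂ρ hs.le
      have e2 : (F.card : ℝ≥0∞) = ENNReal.ofReal (F.card : ℝ) := by
        simp
      rw [e1, e2, ← ENNReal.ofReal_mul (p := (F.card : ℝ)) (Nat.cast_nonneg _), hudiam,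
        ENNReal.ofReal_rpow_of_pos hρpos', ← ENNReal.ofReal_mul (p := (2 * M + 3) ^ k * C₂ ^ s)
          (mul_nonneg (pow_nonneg (by linarith) _) (Real.rpow_nonneg hC₂0 _))]
      apply ENNReal.ofReal_le_ofReal
      have e3 : (C₂ * ρ ^ (1 + α)) ^ s = C₂ ^ s * ρ ^ ((1 + α) * s) := by
        rw [Real.mul_rpow hC₂0 (by positivity), Real.rpow_mul hρ0]
      rw [e3]
      have e4 : ρ ^ (-(α * k)) * ρ ^ ((1 + α) * s) = ρ ^ ((1 + α) * s - α * k) := by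
        rw [← Real.rpow_add hρpos']
        ring_nf
      calc (F.card : ℝ) * (C₂ ^ s * ρ ^ ((1 + α) * s))
          ≤ ((2 * M + 3) ^ k * ρ ^ (-(α * k))) * (C₂ ^ s * ρ ^ ((1 + α) * s)) := by
            apply mul_le_mul_of_nonneg_right hcard (by positivity)
        _ = (2 * M + 3) ^ k * C₂ ^ s * (ρ ^ (-(α * k)) * ρ ^ ((1 + α) * s)) := by ring
        _ = (2 * M + 3) ^ k * C₂ ^ s * ρ ^ ((1 + α) * s - α * ↑k) := by rw [e4]

lemma exists_cover_of_hausdorff_zero {X : Type*} [EMetricSpace X] [MeasurableSpace X]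
    [BorelSpace X] {Y : Set X} {b : ℝ} (h : μH[b] Y = 0) (r : ℝ≥0∞) (hr : 0 < r)
    (ε : ℝ≥0∞) (hε : 0 < ε) :
    ∃ t : ℕ → Set X, (Y ⊆ ⋃ n, t n) ∧ (∀ n, EMetric.diam (t n) ≤ r) ∧
      ∑' n, ⨆ _ : (t n).Nonempty, EMetric.diam (t n) ^ b < ε := by
  rw [MeasureTheory.Measure.hausdorffMeasure_apply] at h
  have h1 : (⨅ (t : ℕ → Set X) (_ : Y ⊆ ⋃ n, t n) (_ : ∀ n, EMetric.diam (t n) ≤ r),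
      ∑' n, ⨆ _ : (t n).Nonempty, EMetric.diam (t n) ^ b) = 0 := by
    refine le_antisymm ?_ zero_le
    rw [← h]
    exact le_iSup₂ (f := fun (r : ℝ≥0∞) (_ : 0 < r) =>
      ⨅ (t : ℕ → Set X) (_ : Y ⊆ ⋃ n, t n) (_ : ∀ n, EMetric.diam (t n) ≤ r),
        ∑' n, ⨆ _ : (t n).Nonempty, EMetric.diam (t n) ^ b) r hr
  have h2 : (⨅ (t : ℕ → Set X) (_ : Y ⊆ ⋃ n, t n) (_ : ∀ n, EMetric.diam (t n) ≤ r),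
      ∑' n, ⨆ _ : (t n).Nonempty, EMetric.diam (t n) ^ b) < ε := h1.le.trans_lt hε
  obtain ⟨t, ht⟩ := iInf_lt_iff.mp h2
  obtain ⟨hcov, ht⟩ := iInf_lt_iff.mp ht
  obtain ⟨hdiam, ht⟩ := iInf_lt_iff.mp ht
  exact ⟨t, hcov, hdiam, ht⟩

lemma hausdorff_zero_of_covers {X : Type*} [EMetricSpace X] [MeasurableSpace X]
    [BorelSpace X] {A : Set X} {s : ℝ}
    (H : ∀ r : ℝ≥0∞, 0 < r → ∀ ε : ℝ≥0∞, 0 < ε → ∃ t : ℕ → Set X, (A ⊆ ⋃ n, t n) ∧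
      (∀ n, EMetric.diam (t n) ≤ r) ∧
      ∑' n, ⨆ _ : (t n).Nonempty, EMetric.diam (t n) ^ s ≤ ε) :
    μH[s] A = 0 := by
  refine le_antisymm ?_ zero_le
  rw [MeasureTheory.Measure.hausdorffMeasure_apply]
  refine iSup₂_le fun r hr => ?_
  refine ENNReal.le_of_forall_pos_le_add fun c hc _ => ?_
  obtain ⟨t, hcov, hdiam, hsum⟩ := H r hr c (by exact_mod_cast hc)
  rw [zero_add]
  calc (⨅ (t : ℕ → Set X) (_ : A ⊆ ⋃ n, t n) (_ : ∀ n, EMetric.diam (t n) ≤ r),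
      ∑' n, ⨆ _ : (t n).Nonempty, EMetric.diam (t n) ^ s)
      ≤ ∑' n, ⨆ _ : (t n).Nonempty, EMetric.diam (t n) ^ s :=
        iInf_le_of_le t (iInf_le_of_le hcov (iInf_le_of_le hdiam le_rfl))
    _ ≤ c := hsum

lemma bounded_case (d k : ℕ) (α L β : ℝ) (hα : 0 < α) (hα1 : α ≤ 1) (hL : 0 ≤ L)
    (φ : EuclideanSpace ℝ (Fin d) → EuclideanSpace ℝ (Fin (d - 1)))
    (hdiff : Differentiable ℝ φ)
    (hHolder : ∀ x y, ‖fderiv ℝ φ x - fderiv ℝ φ y‖ ≤ L * ‖x - y‖ ^ α)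
    (Y : Set (EuclideanSpace ℝ (Fin d)))
    (hrank : ∀ x ∈ Y, finrank ℝ (LinearMap.range (fderiv ℝ φ x).toLinearMap) ≤ k)
    (hβ : 0 ≤ β) (hdimY : dimH Y ≤ ENNReal.ofReal β)
    (R : ℝ) (hR : 0 ≤ R) (hYR : Y ⊆ closedBall 0 R) :
    dimH (φ '' Y) ≤ ENNReal.ofReal ((β + α * k) / (1 + α)) := by
  classical
  set M : ℝ := ‖fderiv ℝ φ 0‖ + L * R ^ α with hMdef
  have hM0 : 0 ≤ M := by positivity
  have hMb : ∀ x ∈ Y, ‖fderiv ℝ φ x‖ ≤ M := by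
    intro x hx
    have h2 : ‖x - 0‖ ≤ R := by
      have := hYR hx
      rw [mem_closedBall, dist_eq_norm] at this
      simpa using this
    calc ‖fderiv ℝ φ x‖ = ‖(fderiv ℝ φ x - fderiv ℝ φ 0) + fderiv ℝ φ 0‖ := by
          rw [sub_add_cancel]
    _ ≤ ‖fderiv ℝ φ x - fderiv ℝ φ 0‖ + ‖fderiv ℝ φ 0‖ := norm_add_le _ _
    _ ≤ L * ‖x - 0‖ ^ α + ‖fderiv ℝ φ 0‖ := by
        have := hHolder x 0
        linarith
    _ ≤ L * R ^ α + ‖fderiv ℝ φ 0‖ := by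
        have hnn : (0:ℝ) ≤ ‖x - 0‖ := norm_nonneg _
        have := Real.rpow_le_rpow hnn h2 hα.le
        nlinarith
    _ = M := by rw [hMdef]; ring
  have htarget0 : 0 ≤ (β + α * k) / (1 + α) := by positivity
  apply dimH_le
  intro s' hs'
  by_contra hcon
  push_neg at hcon
  have hst : (β + α * k) / (1 + α) < (s' : ℝ) := by
    have h1 := (ENNReal.ofReal_lt_iff_lt_toReal htarget0 ENNReal.coe_ne_top).mp hcon
    simpa using h1
  set s : ℝ := (s' : ℝ) with hsdef
  have hs0 : 0 < s := lt_of_le_of_lt htarget0 hst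
  set β' : ℝ := (1 + α) * s - α * k with hβ'def
  have hββ' : β < β' := by
    rw [div_lt_iff₀ (by linarith)] at hst
    rw [hβ'def]; linarith
  have hβ'0 : 0 < β' := lt_of_le_of_lt hβ hββ'
  have hYzero : μH[β'] Y = 0 := by
    have h1 : dimH Y < (β'.toNNReal : ℝ≥0∞) := by
      refine lt_of_le_of_lt hdimY ?_
      have : (β'.toNNReal : ℝ≥0∞) = ENNReal.ofReal β' := rfl
      rw [this]
      exact ENNReal.ofReal_lt_ofReal_iff (by linarith) |>.mpr hββ'
    have h2 := hausdorffMeasure_of_dimH_lt h1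
    rwa [Real.coe_toNNReal _ hβ'0.le] at h2
  suffices hz : μH[s] (φ '' Y) = 0 by
    rw [hz] at hs'
    exact ENNReal.zero_ne_top hs'
  apply hausdorff_zero_of_covers
  intro r hr ε hε
  set C₂ : ℝ := 2 * (Real.sqrt k + L) with hC₂def
  have hC₂0 : 0 ≤ C₂ := by positivity
  set K : ℝ≥0∞ := ENNReal.ofReal ((2 * M + 3) ^ k * C₂ ^ s) + 1 with hKdef
  have hKne : K ≠ ∞ := by
    rw [hKdef]
    exact ENNReal.add_ne_top.mpr ⟨ENNReal.ofReal_ne_top, ENNReal.one_ne_top⟩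
  have hKpos : (0:ℝ≥0∞) < K := by
    rw [hKdef]
    exact lt_of_lt_of_le zero_lt_one le_add_self
  have hKne0 : K ≠ 0 := hKpos.ne'
  obtain ⟨r₀, hr₀, hr₀le⟩ : ∃ r₀ : ℝ, 0 < r₀ ∧ ENNReal.ofReal r₀ ≤ r := by
    rcases eq_or_ne r ∞ with rfl | hne
    · exact ⟨1, one_pos, le_top⟩
    · exact ⟨r.toReal, ENNReal.toReal_pos hr.ne' hne,
        le_of_eq (ENNReal.ofReal_toReal hne)⟩
  set ρ₀ : ℝ := min 1 (r₀ / (C₂ + 1)) with hρ₀def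
  have hρ₀pos : 0 < ρ₀ := lt_min one_pos (by positivity)
  have hρ₀1 : ρ₀ ≤ 1 := min_le_left _ _
  set ε' : ℝ≥0∞ := (min ε 1) / K with hε'def
  have hε'pos : 0 < ε' := by
    rw [hε'def]
    exact ENNReal.div_pos (lt_min hε one_pos).ne' hKne
  obtain ⟨t, hcov, hdiam, hsum⟩ := exists_cover_of_hausdorff_zero hYzero
    (ENNReal.ofReal ρ₀) (ENNReal.ofReal_pos.mpr hρ₀pos) ε' hε'pos
  set t' : ℕ → Set (EuclideanSpace ℝ (Fin d)) := fun n => t n ∩ Y with ht'def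
  have hsub : ∀ n, t' n ⊆ Y := fun n => inter_subset_right
  have hdiam' : ∀ n, EMetric.diam (t' n) ≤ ENNReal.ofReal ρ₀ :=
    fun n => le_trans (EMetric.diam_mono inter_subset_left) (hdiam n)
  have hdiam1 : ∀ n, EMetric.diam (t' n) ≤ ENNReal.ofReal 1 :=
    fun n => le_trans (hdiam' n) (ENNReal.ofReal_le_ofReal hρ₀1)
  have hP : ∀ n : ℕ, ∃ g : ℕ → Set (EuclideanSpace ℝ (Fin (d - 1))),
      (φ '' (t' n) ⊆ ⋃ j, g j) ∧
      (∀ j, EMetric.diam (g j) ≤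
        ENNReal.ofReal ((2 * (Real.sqrt k + L)) * (EMetric.diam (t' n)).toReal ^ (1 + α))) ∧
      ∑' j, EMetric.diam (g j) ^ s ≤
        ENNReal.ofReal ((2 * M + 3) ^ k * (2 * (Real.sqrt k + L)) ^ s) *
          EMetric.diam (t' n) ^ ((1 + α) * s - α * k) :=
    fun n => piece_cover2 α L M s hα hL hM0 hs0 φ hdiff hHolder Y hrank hMb
      (t' n) (hsub n) (hdiam1 n)
  choose g hg1 hg2 hg3 using hP
  set e : ℕ ≃ ℕ × ℕ := (Denumerable.eqv (ℕ × ℕ)).symm with hedef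
  refine ⟨fun m => g (e m).1 (e m).2, ?_, ?_, ?_⟩
  · -- coverage
    rintro _ ⟨y, hy, rfl⟩
    obtain ⟨n, hn⟩ := mem_iUnion.mp (hcov hy)
    have hyn : y ∈ t' n := ⟨hn, hy⟩
    obtain ⟨j, hj⟩ := mem_iUnion.mp (hg1 n (mem_image_of_mem φ hyn))
    refine mem_iUnion.mpr ⟨e.symm (n, j), ?_⟩
    simpa [Equiv.apply_symm_apply] using hj
  · -- diameters small
    intro m
    refine le_trans (hg2 (e m).1 (e m).2) (le_trans ?_ hr₀le)
    apply ENNReal.ofReal_le_ofReal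
    have h1 : (EMetric.diam (t' (e m).1)).toReal ≤ ρ₀ := by
      have := ENNReal.toReal_mono ENNReal.ofReal_ne_top (hdiam' (e m).1)
      rwa [ENNReal.toReal_ofReal hρ₀pos.le] at this
    have h2 : (EMetric.diam (t' (e m).1)).toReal ^ (1 + α) ≤ ρ₀ ^ (1 + α) :=
      Real.rpow_le_rpow ENNReal.toReal_nonneg h1 (by linarith)
    have h3 : ρ₀ ^ (1 + α) ≤ ρ₀ :=  by
      calc ρ₀ ^ (1 + α) ≤ ρ₀ ^ (1:ℝ) :=
        Real.rpow_le_rpow_of_exponent_ge hρ₀pos hρ₀1 (by linarith)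
      _ = ρ₀ := Real.rpow_one _
    have h4 : ρ₀ ≤ r₀ / (C₂ + 1) := min_le_right _ _
    have h5 : C₂ * ρ₀ ≤ r₀ := by
      have hC₂1 : (0:ℝ) < C₂ + 1 := by linarith
      have h6 : C₂ * ρ₀ ≤ C₂ * (r₀ / (C₂ + 1)) := mul_le_mul_of_nonneg_left h4 hC₂0
      have h7 : C₂ * (r₀ / (C₂ + 1)) ≤ r₀ := by
        rw [mul_div_assoc', div_le_iff₀ hC₂1]
        nlinarith
      linarith
    calc (2 * (Real.sqrt k + L)) * (EMetric.diam (t' (e m).1)).toReal ^ (1 + α)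
        ≤ C₂ * ρ₀ := by
          rw [hC₂def]
          apply mul_le_mul_of_nonneg_left (le_trans h2 h3) (by positivity)
      _ ≤ r₀ := h5
  · -- the sum
    have e1 : ∑' m, ⨆ _ : ((fun m => g (e m).1 (e m).2) m).Nonempty,
        EMetric.diam ((fun m => g (e m).1 (e m).2) m) ^ s
        ≤ ∑' m, EMetric.diam (g (e m).1 (e m).2) ^ s := by
      apply ENNReal.tsum_le_tsum
      intro m
      exact iSup_le fun _ => le_rfl
    refine le_trans e1 ?_
    have e2 : ∑' m, EMetric.diam (g (e m).1 (e m).2) ^ s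
        = ∑' p : ℕ × ℕ, EMetric.diam (g p.1 p.2) ^ s :=
      e.tsum_eq (fun p => EMetric.diam (g p.1 p.2) ^ s)
    rw [e2, ENNReal.tsum_prod (f := fun a b => EMetric.diam (g a b) ^ s)]
    have e3 : ∀ n, ∑' j, EMetric.diam (g n j) ^ s
        ≤ K * ⨆ _ : (t n).Nonempty, EMetric.diam (t n) ^ β' := by
      intro n
      refine le_trans (hg3 n) ?_
      have hfac : ENNReal.ofReal ((2 * M + 3) ^ k * (2 * (Real.sqrt k + L)) ^ s) ≤ K := by
        rw [hKdef, hC₂def]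
        exact le_self_add
      have hdm : EMetric.diam (t' n) ^ ((1 + α) * s - α * k)
          ≤ ⨆ _ : (t n).Nonempty, EMetric.diam (t n) ^ β' := by
        rcases Set.eq_empty_or_nonempty (t' n) with he | hne
        · rw [he]
          simp only [EMetric.diam, EMetric.diam_empty]
          rw [ENNReal.zero_rpow_of_pos hβ'0]
          exact zero_le
        · have htn : (t n).Nonempty := hne.mono inter_subset_left
          refine le_trans ?_ (le_iSup_of_le htn le_rfl)
          have : EMetric.diam (t' n) ≤ EMetric.diam (t n) :=
            EMetric.diam_mono inter_subset_left
          exact ENNReal.rpow_le_rpow this hβ'0.le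
      exact mul_le_mul' hfac hdm
    refine le_trans (ENNReal.tsum_le_tsum e3) ?_
    rw [ENNReal.tsum_mul_left]
    calc K * ∑' n, ⨆ _ : (t n).Nonempty, EMetric.diam (t n) ^ β'
        ≤ K * ε' := mul_le_mul_right hsum.le K
      _ = K * ((min ε 1) / K) := by rw [hε'def]
      _ ≤ min ε 1 := ENNReal.mul_div_le
      _ ≤ ε := min_le_left _ _


/-- Lemma: deterministic image dimension bound.
If `φ : ℝ^d → ℝ^{d-1}` has an `α`-Hölder derivative and `Y` is a set of Hausdorff
dimension at most `β` on which `rank Dφ ≤ k` (with `k ≤ d-2`), then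
`dimH (φ '' Y) ≤ (β + α k)/(1+α)`. -/
theorem image_dimension_bound
    (d k : ℕ) (hk : k ≤ d - 2) (hd : 2 ≤ d)
    (α L β : ℝ) (hα : 0 < α) (hα1 : α ≤ 1) (hL : 0 ≤ L)
    (φ : EuclideanSpace ℝ (Fin d) → EuclideanSpace ℝ (Fin (d - 1)))
    (hdiff : Differentiable ℝ φ)
    (hHolder : ∀ x y, ‖fderiv ℝ φ x - fderiv ℝ φ y‖ ≤ L * ‖x - y‖ ^ α)
    (Y : Set (EuclideanSpace ℝ (Fin d)))
    (hrank : ∀ x ∈ Y,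
      Module.finrank ℝ (LinearMap.range (fderiv ℝ φ x).toLinearMap) ≤ k)
    (hβ : 0 ≤ β) (hdimY : dimH Y ≤ ENNReal.ofReal β) :
    dimH (φ '' Y) ≤ ENNReal.ofReal ((β + α * k) / (1 + α)) := by
  have hYdecomp : Y = ⋃ n : ℕ, Y ∩ closedBall 0 (n : ℝ) := by
    ext y
    simp only [mem_iUnion, mem_inter_iff, mem_closedBall, dist_zero_right]
    constructor
    · intro hy
      exact ⟨⌈‖y‖⌉₊, hy, Nat.le_ceil _⟩
    · rintro ⟨n, hn, _⟩
      exact hn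
  rw [hYdecomp, image_iUnion, dimH_iUnion]
  refine iSup_le fun n => ?_
  exact bounded_case d k α L β hα hα1 hL φ hdiff hHolder (Y ∩ closedBall 0 (n : ℝ))
    (fun x hx => hrank x hx.1) hβ (le_trans (dimH_mono inter_subset_left) hdimY)
    (n : ℝ) (Nat.cast_nonneg n) inter_subset_right
end

section
/- Let W ⊆ ℝ^{(d-1)×d} be the set of (d−1)×d real matrices of rank at most k, where 0 ≤ k ≤ d−2, and let c₀ = (d−k)(d−1−k). For every N > 0 there is a constant C (depending on d, k, N) such that for all δ ∈ (0,1], the Lebesgue measure of the δ-neighborhood of W ∩ B_N in ℝ^{(d-1)×d} is at most C·δ^{c₀}, where B_N is the closed ball of radius N. -/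
open MeasureTheory Metric Matrix

noncomputable section


def grVec (d k : ℕ) (σ : (Fin (d-k) ⊕ Fin k) ≃ Fin d) (M : Fin k → Fin (d-k) → ℝ)
    (j : Fin (d-k)) : Fin d → ℝ :=
  fun i => Sum.elim (fun j' => if j' = j then (1:ℝ) else 0) (fun l => M l j) (σ.symm i)

theorem exists_good_rows (d k : ℕ) (w : Fin (d-k) → (Fin d → ℝ))
    (hwli : LinearIndependent ℝ w) :
    ∃ g : Fin (d-k) → Fin d,
      LinearIndependent ℝ (fun a => (fun i => w i (g a)) : Fin (d-k) → Fin (d-k) → ℝ) := by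
  classical
  set r : Fin d → EuclideanSpace ℝ (Fin (d-k)) := fun i => WithLp.toLp 2 (fun a => w a i) with hr
  have hspan : Submodule.span ℝ (Set.range r) = ⊤ := by
    by_contra hne
    have hbot : (Submodule.span ℝ (Set.range r))ᗮ ≠ ⊥ :=
      fun h => hne (Submodule.orthogonal_eq_bot_iff.1 h)
    obtain ⟨c, hc, hc0⟩ := Submodule.exists_mem_ne_zero_of_ne_bot hbot
    have horth : ∀ i, (inner ℝ (r i) c : ℝ) = 0 := fun i =>
      (Submodule.mem_orthogonal _ c).1 hc _ (Submodule.subset_span ⟨i, rfl⟩)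
    have : ∀ a, c a = 0 := by
      have := Fintype.linearIndependent_iff.1 hwli (fun a => c a) ?_
      · exact this
      · funext i
        have := horth i
        simpa [PiLp.inner_apply, hr, mul_comm] using this
    exact hc0 (by ext a; exact this a)
  obtain ⟨t, hts, htsp, htli⟩ := exists_linearIndependent ℝ (Set.range r)
  rw [hspan] at htsp
  have htfin : t.Finite := Set.Finite.subset (Set.finite_range r) hts
  have : Fintype t := htfin.fintype
  have hb : Module.Basis t ℝ (EuclideanSpace ℝ (Fin (d-k))) :=
    Module.Basis.mk htli (by rw [Subtype.range_coe, htsp])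
  have hcard : Fintype.card t = d - k := by
    have := Module.finrank_eq_card_basis hb
    simpa using this.symm
  obtain ⟨e⟩ : Nonempty (Fin (d-k) ≃ t) := ⟨(Fintype.equivFinOfCardEq hcard).symm⟩
  have hsel : ∀ a : Fin (d-k), ∃ i : Fin d, r i = (e a : EuclideanSpace ℝ (Fin (d-k))) :=
    fun a => hts (e a).2
  choose g hg using hsel
  refine ⟨g, ?_⟩
  have h2 : LinearIndependent ℝ (fun a : Fin (d-k) => r (g a)) := by
    have h1 : LinearIndependent ℝ
        (fun a : Fin (d-k) => ((e a : t) : EuclideanSpace ℝ (Fin (d-k)))) :=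
      htli.comp e e.injective
    simpa [funext hg] using h1
  have h3 := h2.map' (WithLp.linearEquiv 2 ℝ (Fin (d-k) → ℝ)).toLinearMap
    (LinearEquiv.ker _)
  exact h3

theorem graph_of_low_rank (d k : ℕ) (hkd : k ≤ d) (A₀ : Matrix (Fin (d-1)) (Fin d) ℝ)
    (hrk : A₀.rank ≤ k) :
    ∃ (σ : (Fin (d-k) ⊕ Fin k) ≃ Fin d) (M : Fin k → Fin (d-k) → ℝ),
      (∀ l j, |M l j| ≤ 1) ∧ ∀ j, A₀ *ᵥ grVec d k σ M j = 0 := by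
  classical
  have hker : d - k ≤ Module.finrank ℝ (LinearMap.ker A₀.mulVecLin) := by
    have h1 := LinearMap.finrank_range_add_finrank_ker A₀.mulVecLin
    have h2 : Module.finrank ℝ (Fin d → ℝ) = d := by simp
    have h3 : Module.finrank ℝ (LinearMap.range A₀.mulVecLin) = A₀.rank := rfl
    omega
  obtain ⟨w', hw'⟩ := exists_linearIndependent_of_le_finrank hker
  set w : Fin (d-k) → (Fin d → ℝ) := fun j => (w' j : Fin d → ℝ) with hw_def
  have hwli : LinearIndependent ℝ w :=
    hw'.map' (LinearMap.ker A₀.mulVecLin).subtype (Submodule.ker_subtype _)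
  have hwker : ∀ j, A₀ *ᵥ w j = 0 := fun j => (w' j).2
  set Q : Matrix (Fin d) (Fin (d-k)) ℝ := Matrix.of (fun i j => w j i) with hQ
  obtain ⟨g, hg⟩ := exists_good_rows d k w hwli
  have hdetg : (Q.submatrix g id).det ≠ 0 := by
    have hu : IsUnit (Q.submatrix g id) := by
      rw [← Matrix.linearIndependent_rows_iff_isUnit]
      exact hg
    exact ((Matrix.isUnit_iff_isUnit_det _).1 hu).ne_zero
  obtain ⟨f₀, -, hf₀max⟩ := Finset.exists_max_image (Finset.univ : Finset (Fin (d-k) → Fin d))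
    (fun f => |(Q.submatrix f id).det|) ⟨g, Finset.mem_univ g⟩
  have hmax : ∀ f : Fin (d-k) → Fin d,
      |(Q.submatrix f id).det| ≤ |(Q.submatrix f₀ id).det| :=
    fun f => hf₀max f (Finset.mem_univ f)
  set Q' : Matrix (Fin (d-k)) (Fin (d-k)) ℝ := Q.submatrix f₀ id with hQ'
  have hdet : Q'.det ≠ 0 := by
    intro h
    have := hmax g
    rw [show |Q'.det| = 0 by rw [h, abs_zero]] at this
    exact hdetg (abs_eq_zero.mp (le_antisymm this (abs_nonneg _)))
  have hinj : Function.Injective f₀ := by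
    intro a b hab
    by_contra hne
    apply hdet
    apply Matrix.det_zero_of_row_eq hne
    funext c
    simp [hQ', Matrix.submatrix_apply, hab]
  have hcardc : Fintype.card ((Set.range f₀)ᶜ : Set (Fin d)) = k := by
    rw [Fintype.card_compl_set, Set.card_range_of_injective hinj]
    simp
    omega
  have hcardr : Fintype.card (Fin k) = Fintype.card ((Set.range f₀)ᶜ : Set (Fin d)) := by
    simp [hcardc]
  set σ : (Fin (d-k) ⊕ Fin k) ≃ Fin d :=
    (Equiv.sumCongr (Equiv.ofInjective f₀ hinj) (Fintype.equivOfCardEq hcardr)).trans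
      (Equiv.Set.sumCompl (Set.range f₀)) with hσ
  have hσl : ∀ j, σ (Sum.inl j) = f₀ j := fun j => by
    simp [hσ, Equiv.Set.sumCompl_apply_inl]
  set R : Matrix (Fin d) (Fin (d-k)) ℝ := Q * Q'⁻¹ with hR
  have hRrow : ∀ j' j, R (f₀ j') j = (1 : Matrix (Fin (d-k)) (Fin (d-k)) ℝ) j' j := by
    intro j' j
    have h1 : Q' * Q'⁻¹ = 1 := Matrix.mul_nonsing_inv Q' hdet.isUnit
    calc R (f₀ j') j = (Q' * Q'⁻¹) j' j := by
          simp [hR, hQ', Matrix.mul_apply, Matrix.submatrix_apply]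
      _ = (1 : Matrix (Fin (d-k)) (Fin (d-k)) ℝ) j' j := by rw [h1]
  have hRbound : ∀ i j, |R i j| ≤ 1 := by
    intro i j
    have hadj : ∑ x, Q i x * Q'.adjugate x j = (Q'.updateRow j (Q i)).det := by
      have h1 : ∀ x : Fin (d-k), Q i x * Q'.adjugate x j
          = Q'ᵀ.cramer (Pi.single x (Q i x)) j := by
        intro x
        rw [Matrix.adjugate_def]
        simp only [Matrix.of_apply]
        rw [← smul_eq_mul, ← Pi.smul_apply, ← LinearMap.map_smul, ← Pi.single_smul',
          smul_eq_mul, mul_one]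
      rw [Finset.sum_congr rfl (fun x _ => h1 x), ← Finset.sum_apply, ← map_sum,
        Finset.univ_sum_single, Matrix.cramer_transpose_apply]
    have hcram : R i j = Q'.det⁻¹ * (Q'.updateRow j (Q i)).det := by
      have hinv : Q'⁻¹ = Q'.det⁻¹ • Q'.adjugate := by
        rw [Matrix.inv_def, Ring.inverse_eq_inv']
      calc R i j = ∑ x, Q i x * (Q'.det⁻¹ * Q'.adjugate x j) := by
            rw [hR, Matrix.mul_apply]
            exact Finset.sum_congr rfl fun x _ => by rw [hinv]; simp
        _ = Q'.det⁻¹ * ∑ x, Q i x * Q'.adjugate x j := by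
            rw [Finset.mul_sum]
            exact Finset.sum_congr rfl fun x _ => by ring
        _ = Q'.det⁻¹ * (Q'.updateRow j (Q i)).det := by rw [hadj]
    have hupd : Q'.updateRow j (Q i) = Q.submatrix (Function.update f₀ j i) id := by
      ext a b
      by_cases h : a = j
      · subst h; simp [Matrix.updateRow_apply, Function.update_apply]
      · simp [hQ', Matrix.updateRow_apply, Function.update_apply, h]
    rw [hcram, hupd, abs_mul, abs_inv]
    rw [inv_mul_le_iff₀ (abs_pos.mpr hdet), mul_one]
    exact hmax _
  refine ⟨σ, fun l j => R (σ (Sum.inr l)) j, fun l j => hRbound _ _, ?_⟩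
  intro j
  have hgr : grVec d k σ (fun l j => R (σ (Sum.inr l)) j) j = fun i => R i j := by
    funext i
    have hi : i = σ (σ.symm i) := (σ.apply_symm_apply i).symm
    rcases hs : σ.symm i with j' | l
    · rw [grVec]
      simp only [hs, Sum.elim_inl]
      rw [hi, hs, hσl j', hRrow j' j]
      simp [Matrix.one_apply]
    · rw [grVec]
      simp only [hs, Sum.elim_inr]
      rw [hi, hs]
  rw [hgr]
  have hAQ : A₀ * Q = 0 := by
    ext i' j'
    have := congrFun (hwker j') i'
    simpa [hQ, Matrix.mul_apply, Matrix.mulVec, dotProduct] using this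
  have hAR : A₀ * R = 0 := by
    rw [hR, ← Matrix.mul_assoc, hAQ, Matrix.zero_mul]
  funext i'
  have := congrFun (congrFun hAR i') j
  simpa [Matrix.mulVec, dotProduct, Matrix.mul_apply] using this
def Tmat (d k : ℕ) (σ : (Fin (d-k) ⊕ Fin k) ≃ Fin d) (M : Fin k → Fin (d-k) → ℝ) :
    Matrix (Fin d) (Fin d) ℝ :=
  Matrix.of fun i j => Sum.elim (fun j' => grVec d k σ M j' i)
    (fun l => if i = σ (Sum.inr l) then (1:ℝ) else 0) (σ.symm j)

theorem det_Tmat (d k : ℕ) (σ : (Fin (d-k) ⊕ Fin k) ≃ Fin d) (M : Fin k → Fin (d-k) → ℝ) :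
    (Tmat d k σ M).det = 1 := by
  classical
  rw [← Matrix.det_submatrix_equiv_self σ (Tmat d k σ M)]
  have : (Tmat d k σ M).submatrix σ σ
      = Matrix.fromBlocks (1 : Matrix (Fin (d-k)) (Fin (d-k)) ℝ) 0
          (Matrix.of fun l j => M l j) (1 : Matrix (Fin k) (Fin k) ℝ) := by
    ext a b
    rcases a with a | a <;> rcases b with b | b <;>
      simp [Tmat, grVec, Matrix.submatrix_apply, Matrix.one_apply, Matrix.fromBlocks,
        σ.injective.eq_iff, eq_comm]
  rw [this, Matrix.det_fromBlocks_zero₁₂]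
  simp

/-- right multiplication by `T` as a linear endomorphism of Euclidean matrix space -/
def rmulT (d : ℕ) (T : Matrix (Fin d) (Fin d) ℝ) :
    EuclideanSpace ℝ (Fin (d-1) × Fin d) →ₗ[ℝ] EuclideanSpace ℝ (Fin (d-1) × Fin d) where
  toFun A := WithLp.toLp 2 (fun p : Fin (d-1) × Fin d => ∑ l, A (p.1, l) * T l p.2)
  map_add' A B := by
    ext p
    simp [PiLp.add_apply, add_mul, Finset.sum_add_distrib]
  map_smul' c A := by
    ext p
    simp [PiLp.smul_apply, Finset.mul_sum, mul_assoc]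

theorem det_rmulT (d : ℕ) (T : Matrix (Fin d) (Fin d) ℝ) :
    LinearMap.det (rmulT d T) = T.det ^ (d-1) := by
  classical
  set b := (EuclideanSpace.basisFun (Fin (d-1) × Fin d) ℝ).toBasis with hb
  rw [← LinearMap.det_toMatrix b]
  have hmat : LinearMap.toMatrix b b (rmulT d T)
      = Matrix.kroneckerMap (· * ·) (1 : Matrix (Fin (d-1)) (Fin (d-1)) ℝ) Tᵀ := by
    ext p q
    rw [LinearMap.toMatrix_apply]
    have hbq : b q = EuclideanSpace.single q 1 := by
      simp [hb]
    rw [hbq]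
    have : (rmulT d T) (EuclideanSpace.single q 1) p
        = if p.1 = q.1 then T q.2 p.2 else 0 := by
      show (∑ l, EuclideanSpace.single q 1 (p.1, l) * T l p.2) = _
      by_cases h : p.1 = q.1
      · rw [Finset.sum_eq_single q.2]
        · simp [EuclideanSpace.single_apply, h]
        · intro l _ hl
          simp [EuclideanSpace.single_apply, Prod.ext_iff, hl]
        · simp
      · have : ∀ l : Fin d, EuclideanSpace.single q 1 (p.1, l) * T l p.2 = 0 := by
          intro l
          simp [EuclideanSpace.single_apply, Prod.ext_iff, h]
        rw [Finset.sum_congr rfl (fun l _ => this l)]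
        simp [h]
    simp only [hb]
    rw [OrthonormalBasis.coe_toBasis_repr_apply]
    simp only [EuclideanSpace.basisFun_repr]
    rw [this]
    simp [Matrix.kroneckerMap_apply, Matrix.one_apply]
  rw [hmat, Matrix.det_kronecker]
  simp

theorem vol_box (n d : ℕ) (g : Fin d → ℝ) :
    volume {A : EuclideanSpace ℝ (Fin n × Fin d) | ∀ p, |A p| ≤ g p.2}
      = ∏ p : Fin n × Fin d, ENNReal.ofReal (2 * g p.2) := by
  have hset : {A : EuclideanSpace ℝ (Fin n × Fin d) | ∀ p, |A p| ≤ g p.2}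
      = (MeasurableEquiv.toLp 2 (Fin n × Fin d → ℝ)).symm ⁻¹'
          (Set.univ.pi fun p => Set.Icc (-(g p.2)) (g p.2)) := by
    ext A
    simp [MeasurableEquiv.coe_toLp_symm, Set.mem_pi, abs_le, Pi.le_def, Prod.forall, forall_and]
  rw [hset, (EuclideanSpace.volume_preserving_symm_measurableEquiv_toLp _).measure_preimage
    ((MeasurableSet.univ_pi fun _ => measurableSet_Icc).nullMeasurableSet)]
  rw [volume_pi_pi]
  congr 1
  funext p
  rw [Real.volume_Icc]
  congr 1
  ring

theorem vol_Fset (d k : ℕ) (σ : (Fin (d-k) ⊕ Fin k) ≃ Fin d)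
    (M : Fin k → Fin (d-k) → ℝ) (a bR : ℝ) (ha : 0 ≤ a) (hb : 0 ≤ bR) :
    volume ((rmulT d (Tmat d k σ M)) ⁻¹'
        {B : EuclideanSpace ℝ (Fin (d-1) × Fin d) |
          ∀ p, |B p| ≤ if (σ.symm p.2).isLeft then a else bR})
      ≤ ENNReal.ofReal ((2*a)^((d-k)*(d-1)) * (2*bR)^(k*(d-1))) := by
  have hdet : LinearMap.det (rmulT d (Tmat d k σ M)) ≠ 0 := by
    rw [det_rmulT, det_Tmat]; simp
  rw [MeasureTheory.Measure.addHaar_preimage_linearMap volume hdet]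
  rw [det_rmulT, det_Tmat]
  simp only [one_pow, inv_one, abs_one, ENNReal.ofReal_one, one_mul]
  set g : Fin d → ℝ := fun j => if (σ.symm j).isLeft then a else bR with hg
  rw [vol_box (d-1) d g]
  have hprod : ∏ p : Fin (d-1) × Fin d, ENNReal.ofReal (2 * g p.2)
      = (∏ j : Fin d, ENNReal.ofReal (2 * g j)) ^ (d-1) := by
    rw [Fintype.prod_prod_type]
    simp [Finset.prod_const]
  have hsum : ∏ j : Fin d, ENNReal.ofReal (2 * g j)
      = ENNReal.ofReal (2*a) ^ (d-k) * ENNReal.ofReal (2*bR) ^ k := by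
    rw [← Fintype.prod_equiv σ (fun s => ENNReal.ofReal (2 * g (σ s)))
      (fun j => ENNReal.ofReal (2 * g j)) (fun s => rfl)]
    rw [Fintype.prod_sum_type]
    have hl : ∀ j : Fin (d-k), g (σ (Sum.inl j)) = a := by intro j; simp [hg]
    have hr : ∀ l : Fin k, g (σ (Sum.inr l)) = bR := by intro l; simp [hg]
    simp only [hl, hr, Finset.prod_const]
    simp
  rw [hprod, hsum, mul_pow, ← pow_mul, ← pow_mul,
    ← ENNReal.ofReal_pow (by positivity : (0:ℝ) ≤ 2*a),
    ← ENNReal.ofReal_pow (by positivity : (0:ℝ) ≤ 2*bR),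
    ← ENNReal.ofReal_mul (by positivity)]

theorem coord_le_norm_s2 {ι : Type*} [Fintype ι] (x : EuclideanSpace ℝ ι) (i : ι) :
    |x i| ≤ ‖x‖ := by
  have h := Finset.single_le_sum (f := fun j => ‖x j‖^2) (fun j _ => sq_nonneg _)
    (Finset.mem_univ i)
  rw [EuclideanSpace.norm_eq, ← Real.sqrt_sq_eq_abs]
  apply Real.sqrt_le_sqrt
  simpa [Real.norm_eq_abs, sq_abs] using h

/-- We identify the space of `(d-1) × d` real matrices with the Euclidean space
`ℝ^{(d-1) × d}`. -/
noncomputable def matrixOf (d : ℕ) (A : EuclideanSpace ℝ (Fin (d - 1) × Fin d)) :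
    Matrix (Fin (d - 1)) (Fin d) ℝ :=
  Matrix.of fun i j => A (i, j)

/-- The set `W` of `(d-1) × d` matrices of rank at most `k ≤ d-2`
has codimension `c₀ = (d-k)(d-1-k)`: for every `N > 0` there is `C` such that the
Lebesgue measure of the `δ`-neighborhood of `W ∩ B_N` is at most `C δ^{c₀}` for all
`δ ∈ (0,1]`. -/
theorem low_rank_variety_neighborhood_volume
    (d k : ℕ) (hd : 2 ≤ d) (hk : k ≤ d - 2) (N : ℝ) (hN : 0 < N) :
    ∃ C : ℝ, 0 < C ∧ ∀ δ : ℝ, 0 < δ → δ ≤ 1 →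
      volume {A : EuclideanSpace ℝ (Fin (d - 1) × Fin d) |
          infDist A ({A | (matrixOf d A).rank ≤ k} ∩ closedBall 0 N) ≤ δ}
        ≤ ENNReal.ofReal (C * δ ^ ((d - k) * (d - 1 - k))) := by
  classical
  have hkd : k ≤ d := by omega
  have hEqT : Nonempty ((Fin (d-k) ⊕ Fin k) ≃ Fin d) := by
    refine ⟨Fintype.equivOfCardEq ?_⟩
    simp only [Fintype.card_sum, Fintype.card_fin]
    omega
  set cardσ : ℕ := Fintype.card ((Fin (d-k) ⊕ Fin k) ≃ Fin d) with hcardσ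
  have hcardσpos : 0 < cardσ := Fintype.card_pos
  have hdR : (2:ℝ) ≤ (d:ℝ) := by exact_mod_cast hd
  set C₁ : ℝ := d * (N + 4) with hC₁def
  set R' : ℝ := N + 2 with hR'def
  have hC₁pos : 0 < C₁ := by
    apply mul_pos (by linarith) (by linarith)
  have hR'pos : 0 < R' := by simp only [hR'def]; linarith
  set m : ℕ := k * (d-k) with hmdef
  set a' : ℕ := (d-k) * (d-1) with ha'def
  set b' : ℕ := k * (d-1) with hb'def
  set c₀ : ℕ := (d-k) * (d-1-k) with hc₀def
  have hexp : a' = c₀ + m := by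
    have h1 : d - 1 - k + k = d - 1 := by omega
    calc a' = (d-k) * ((d-1-k) + k) := by rw [h1]
      _ = c₀ + m := by rw [Nat.mul_add]; ring
  set C : ℝ := cardσ * 5^m * (2*C₁)^a' * (2*R')^b' with hCdef
  have hCpos : 0 < C := by
    have h0 : (0:ℝ) < cardσ := by exact_mod_cast hcardσpos
    positivity
  refine ⟨C, hCpos, fun δ hδ hδ1 => ?_⟩
  set S := {A : EuclideanSpace ℝ (Fin (d - 1) × Fin d) | (matrixOf d A).rank ≤ k}
    ∩ closedBall 0 N with hSdef
  have hSne : S.Nonempty := by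
    refine ⟨0, ?_, mem_closedBall_self hN.le⟩
    have h0 : matrixOf d (0 : EuclideanSpace ℝ (Fin (d - 1) × Fin d)) = 0 := by
      ext i j
      rfl
    simp [Set.mem_setOf_eq, h0]
  -- the grid
  set K : ℤ := ⌈1/δ⌉ with hKdef
  set grid : Finset (Fin k → Fin (d-k) → ℤ) :=
    Fintype.piFinset (fun _ => Fintype.piFinset (fun _ => Finset.Icc (-K) K)) with hgriddef
  set Fset : ((Fin (d-k) ⊕ Fin k) ≃ Fin d) → (Fin k → Fin (d-k) → ℤ) →
      Set (EuclideanSpace ℝ (Fin (d - 1) × Fin d)) :=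
    fun σ n => (rmulT d (Tmat d k σ (fun l j => (n l j : ℝ) * δ))) ⁻¹'
      {B : EuclideanSpace ℝ (Fin (d-1) × Fin d) |
        ∀ p, |B p| ≤ if (σ.symm p.2).isLeft then C₁ * δ else R'} with hFsetdef
  -- inclusion
  have hsub : {A : EuclideanSpace ℝ (Fin (d - 1) × Fin d) | infDist A S ≤ δ}
      ⊆ ⋃ σ : (Fin (d-k) ⊕ Fin k) ≃ Fin d, ⋃ n ∈ grid, Fset σ n := by
    intro A hA
    obtain ⟨A₀, hA₀S, hA₀d⟩ := (infDist_lt_iff hSne).1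
      (lt_of_le_of_lt hA (by linarith : δ < 2*δ))
    obtain ⟨hA₀rk, hA₀B⟩ := hA₀S
    have hA₀n : ‖A₀‖ ≤ N := mem_closedBall_zero_iff.1 hA₀B
    obtain ⟨σ, M, hM, hMker⟩ := graph_of_low_rank d k hkd (matrixOf d A₀) hA₀rk
    -- choose grid point
    set n : Fin k → Fin (d-k) → ℤ := fun l j => ⌊M l j / δ⌋ with hndef
    have hfit : ∀ l j, |(n l j : ℝ) * δ - M l j| ≤ δ := by
      intro l j
      have h1 : (n l j : ℝ) ≤ M l j / δ := Int.floor_le _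
      have h2 : M l j / δ < n l j + 1 := Int.lt_floor_add_one _
      have h1' : (n l j : ℝ) * δ ≤ M l j := by
        have := mul_le_mul_of_nonneg_right h1 hδ.le
        rwa [div_mul_cancel₀ _ hδ.ne'] at this
      have h2' : M l j < ((n l j : ℝ) + 1) * δ := by
        have := mul_lt_mul_of_pos_right h2 hδ
        rwa [div_mul_cancel₀ _ hδ.ne'] at this
      rw [abs_le]
      constructor <;> nlinarith
    have hmemg : n ∈ grid := by
      rw [hgriddef]
      rw [Fintype.mem_piFinset]
      intro l
      rw [Fintype.mem_piFinset]
      intro j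
      rw [Finset.mem_Icc]
      have hMb := abs_le.1 (hM l j)
      constructor
      · have hlow : (-1:ℝ)/δ ≤ M l j / δ := by gcongr; exact hMb.1
        have := Int.floor_mono hlow
        rw [neg_div, Int.floor_neg] at this
        exact this
      · have hup : M l j / δ ≤ 1/δ := by gcongr; exact hMb.2
        exact le_trans (Int.floor_mono hup) (Int.floor_le_ceil _)
    refine Set.mem_iUnion.2 ⟨σ, Set.mem_iUnion₂.2 ⟨n, hmemg, ?_⟩⟩
    -- membership in Fset
    set M' : Fin k → Fin (d-k) → ℝ := fun l j => (n l j : ℝ) * δ with hM'def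
    intro p
    have hAnorm : ‖A‖ ≤ N + 2 := by
      have h1 : ‖A‖ ≤ ‖A₀‖ + ‖A - A₀‖ := norm_le_insert' _ _
      have h2 : ‖A - A₀‖ = dist A A₀ := (dist_eq_norm _ _).symm
      have : dist A A₀ ≤ 2*δ := hA₀d.le
      linarith [hA₀n, this, h2 ▸ h1]
    have hdiff : ∀ q, |A q - A₀ q| ≤ 2*δ := by
      intro q
      have h1 : |(A - A₀) q| ≤ ‖A - A₀‖ := coord_le_norm_s2 _ _
      have h2 : (A - A₀) q = A q - A₀ q := rfl
      rw [h2] at h1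
      have h3 : ‖A - A₀‖ = dist A A₀ := (dist_eq_norm _ _).symm
      linarith [hA₀d.le, h3 ▸ h1]
    have hAcoord : ∀ q, |A q| ≤ N + 2 := fun q => le_trans (coord_le_norm_s2 _ _) hAnorm
    show |(rmulT d (Tmat d k σ M')) A p| ≤ _
    show |∑ l, A (p.1, l) * Tmat d k σ M' l p.2| ≤ _
    rcases hs2 : σ.symm p.2 with j | l₀
    · -- kernel column case
      simp only [hs2, Sum.isLeft_inl, if_true]
      have hT : ∀ l, Tmat d k σ M' l p.2 = grVec d k σ M' j l := by
        intro l
        rw [Tmat, Matrix.of_apply, hs2, Sum.elim_inl]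
      rw [Finset.sum_congr rfl (fun l _ => by rw [hT l])]
      set v : Fin d → ℝ := grVec d k σ M j with hvdef
      set v' : Fin d → ℝ := grVec d k σ M' j with hv'def
      have hv1 : ∀ l, |v l| ≤ 1 := by
        intro l
        rw [hvdef, grVec]
        rcases σ.symm l with j' | l'
        · simp only [Sum.elim_inl]
          split <;> simp
        · simp only [Sum.elim_inr]
          exact hM l' j
      have hdv : ∀ l, |v' l - v l| ≤ δ := by
        intro l
        rw [hvdef, hv'def, grVec, grVec]
        rcases σ.symm l with j' | l'
        · simp [hδ.le]
        · simp only [Sum.elim_inr]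
          exact hfit l' j
      have hker0 : ∑ l, A₀ (p.1, l) * v l = 0 := by
        have := congrFun (hMker j) p.1
        simpa [Matrix.mulVec, dotProduct, matrixOf] using this
      have hsplit : ∑ l, A (p.1, l) * v' l
          = (∑ l, A (p.1, l) * (v' l - v l)) + (∑ l, (A (p.1, l) - A₀ (p.1, l)) * v l)
            + ∑ l, A₀ (p.1, l) * v l := by
        rw [← Finset.sum_add_distrib, ← Finset.sum_add_distrib]
        exact Finset.sum_congr rfl fun l _ => by ring
      rw [hsplit, hker0, add_zero]
      have hb1 : |∑ l, A (p.1, l) * (v' l - v l)| ≤ d * ((N+2) * δ) := by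
        calc |∑ l, A (p.1, l) * (v' l - v l)| ≤ ∑ l, |A (p.1, l) * (v' l - v l)| :=
              Finset.abs_sum_le_sum_abs _ _
          _ ≤ ∑ _l : Fin d, (N+2) * δ := by
              apply Finset.sum_le_sum
              intro l _
              rw [abs_mul]
              exact mul_le_mul (hAcoord _) (hdv l) (abs_nonneg _) (by linarith)
          _ = d * ((N+2) * δ) := by simp [Finset.sum_const, mul_comm]
      have hb2 : |∑ l, (A (p.1, l) - A₀ (p.1, l)) * v l| ≤ d * (2*δ) := by
        calc |∑ l, (A (p.1, l) - A₀ (p.1, l)) * v l|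
            ≤ ∑ l, |(A (p.1, l) - A₀ (p.1, l)) * v l| := Finset.abs_sum_le_sum_abs _ _
          _ ≤ ∑ _l : Fin d, 2*δ := by
              apply Finset.sum_le_sum
              intro l _
              rw [abs_mul]
              calc |A (p.1, l) - A₀ (p.1, l)| * |v l| ≤ (2*δ) * 1 :=
                    mul_le_mul (hdiff _) (hv1 l) (abs_nonneg _) (by linarith)
                _ = 2*δ := mul_one _
          _ = d * (2*δ) := by simp [Finset.sum_const, mul_comm]
      calc |∑ l, A (p.1, l) * (v' l - v l) + ∑ l, (A (p.1, l) - A₀ (p.1, l)) * v l|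
          ≤ d * ((N+2) * δ) + d * (2*δ) := le_trans (abs_add_le _ _) (add_le_add hb1 hb2)
        _ ≤ C₁ * δ := by rw [hC₁def]; push_cast; nlinarith [hδ.le]
    · -- bounded column case
      simp only [hs2, Sum.isLeft_inr, Bool.false_eq_true, if_false]
      have hT : ∀ l, Tmat d k σ M' l p.2 = if l = σ (Sum.inr l₀) then (1:ℝ) else 0 := by
        intro l
        rw [Tmat, Matrix.of_apply, hs2, Sum.elim_inr]
      rw [Finset.sum_congr rfl (fun l _ => by rw [hT l])]
      rw [Finset.sum_eq_single (σ (Sum.inr l₀))]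
      · simpa [hR'def] using hAcoord (p.1, σ (Sum.inr l₀))
      · intro l _ hl
        simp [hl]
      · simp
  -- volume computation
  calc volume {A : EuclideanSpace ℝ (Fin (d - 1) × Fin d) | infDist A S ≤ δ}
      ≤ volume (⋃ σ : (Fin (d-k) ⊕ Fin k) ≃ Fin d, ⋃ n ∈ grid, Fset σ n) :=
        measure_mono hsub
    _ ≤ ∑ σ : (Fin (d-k) ⊕ Fin k) ≃ Fin d, volume (⋃ n ∈ grid, Fset σ n) :=
        measure_iUnion_fintype_le _ _
    _ ≤ ∑ σ : (Fin (d-k) ⊕ Fin k) ≃ Fin d, ∑ n ∈ grid, volume (Fset σ n) :=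
        Finset.sum_le_sum fun σ _ => measure_biUnion_finset_le _ _
    _ ≤ ∑ _σ : (Fin (d-k) ⊕ Fin k) ≃ Fin d, ∑ _n ∈ grid,
          ENNReal.ofReal ((2*(C₁*δ))^a' * (2*R')^b') := by
        apply Finset.sum_le_sum
        intro σ _
        apply Finset.sum_le_sum
        intro n _
        exact vol_Fset d k σ _ (C₁*δ) R' (by positivity) hR'pos.le
    _ = (cardσ * grid.card : ℕ) * ENNReal.ofReal ((2*(C₁*δ))^a' * (2*R')^b') := by
        simp only [Finset.sum_const, smul_smul, Finset.card_univ, nsmul_eq_mul]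
        rw [Nat.cast_mul]
        ring
    _ ≤ ENNReal.ofReal (C * δ ^ c₀) := by
        rw [← ENNReal.ofReal_natCast (cardσ * grid.card),
          ← ENNReal.ofReal_mul (Nat.cast_nonneg _)]
        apply ENNReal.ofReal_le_ofReal
        -- real arithmetic
        have h1δ : (1:ℝ) ≤ 1/δ := by
          rw [le_div_iff₀ hδ]; simpa using hδ1
        have hKlt : (K:ℝ) < 1/δ + 1 := by
          rw [hKdef]; exact Int.ceil_lt_add_one _
        have hK1 : (1:ℤ) ≤ K := by
          have h := Int.le_ceil (1/δ)
          have : (1:ℝ) ≤ (K:ℝ) := le_trans h1δ (by rw [hKdef]; exact h)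
          exact_mod_cast this
        have hIcc : ((Finset.Icc (-K) K).card : ℝ) ≤ 5/δ := by
          rw [Int.card_Icc]
          have hnn : (0:ℤ) ≤ K + 1 - (-K) := by omega
          rw [show ((K + 1 - -K).toNat : ℝ) = ((K + 1 - -K : ℤ) : ℝ) by
            exact_mod_cast Int.toNat_of_nonneg hnn]
          push_cast
          have : (5:ℝ)/δ = 5*(1/δ) := by ring
          rw [this]
          linarith
        have hgc : grid.card = (Finset.Icc (-K) K).card ^ m := by
          rw [hgriddef, Fintype.card_piFinset]
          simp only [Fintype.card_piFinset, Finset.prod_const, Finset.card_univ,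
            Fintype.card_fin]
          rw [← pow_mul, hmdef, Nat.mul_comm]
        have hgridR : (grid.card : ℝ) ≤ (5/δ)^m := by
          rw [hgc]
          push_cast
          exact pow_le_pow_left₀ (Nat.cast_nonneg _) hIcc m
        have hXnn : (0:ℝ) ≤ (2*(C₁*δ))^a' * (2*R')^b' := by positivity
        calc ((cardσ * grid.card : ℕ) : ℝ) * ((2*(C₁*δ))^a' * (2*R')^b')
            = (cardσ:ℝ) * (grid.card:ℝ) * ((2*(C₁*δ))^a' * (2*R')^b') := by push_cast; ring
          _ ≤ (cardσ:ℝ) * ((5/δ)^m) * ((2*(C₁*δ))^a' * (2*R')^b') := by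
              have hc : (0:ℝ) ≤ (cardσ:ℝ) := by positivity
              gcongr
          _ = C * δ ^ c₀ := by
              rw [hCdef, hexp, show (2*(C₁*δ)) = (2*C₁)*δ by ring, mul_pow, pow_add, pow_add,
                div_pow]
              have hδm : δ ^ m ≠ 0 := pow_ne_zero _ hδ.ne'
              field_simp

end
end
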